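/- Suppose K is a field with more than two elements, S is a spanning subset of X, and the graph G(S) is connected. Then two nonzero elements α, β of the dual space X* belong to the same orbit of the dual transvection group Tr(S)* if and only if β − α lies in the image of the linear map ω : X → X*. -/

import Mathlib

/-- The set of symplectic transvections `T_{s,k} : x ↦ x + k·ω(x,s)·s`
for `s ∈ S` and `k ≠ 0`, realized as permutations of `X`. -/
def transvectionSet {K X : Type*} [Field K] [AddCommGroup X] [Module K X]
    (ω : X →ₗ[K] X →ₗ[K] K) (S : Set X) : Set (Equiv.Perm X) :=
  {f | ∃ s ∈ S, ∃ k : K, k ≠ 0 ∧ ∀ x, f x = x + (k * ω x s) • s}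

/-- The transvection group `Tr(S)`, the subgroup of permutations of `X`
generated by the symplectic transvections with `s ∈ S`. -/
def transvectionGroup {K X : Type*} [Field K] [AddCommGroup X] [Module K X]
    (ω : X →ₗ[K] X →ₗ[K] K) (S : Set X) : Subgroup (Equiv.Perm X) :=
  Subgroup.closure (transvectionSet ω S)

/-- The graph `G(S)` with vertex set `S` and an edge between `u` and `v`
iff `ω(u,v) ≠ 0`. -/
def transGraph {K X : Type*} [Field K] [AddCommGroup X] [Module K X]
    (ω : X →ₗ[K] X →ₗ[K] K) (S : Set X) : SimpleGraph S :=
  SimpleGraph.fromRel (fun u v => ω u.1 v.1 ≠ 0)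

/-- Two dual vectors are in the same orbit of the dual transvection group
`Tr(S)*`, i.e. `β = α ∘ g` for some `g ∈ Tr(S)`. -/
def sameDualOrbit {K X : Type*} [Field K] [AddCommGroup X] [Module K X]
    (ω : X →ₗ[K] X →ₗ[K] K) (S : Set X) (α β : Module.Dual K X) : Prop :=
  ∃ g ∈ transvectionGroup ω S, ∀ x, β x = α (g x)

namespace Stmt0Aux

variable {K X : Type*} [Field K] [AddCommGroup X] [Module K X]
variable (ω : X →ₗ[K] X →ₗ[K] K) (S : Set X)

lemma skew (halt : ∀ x, ω x x = 0) (x y : X) : ω x y = - ω y x := by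
  have h := halt (x + y)
  simp only [map_add, LinearMap.add_apply, halt x, halt y] at h
  linear_combination h

/-- the transvection as a permutation of `X`. -/
def tperm (halt : ∀ x, ω x x = 0) (s : X) (k : K) : Equiv.Perm X where
  toFun x := x + (k * ω x s) • s
  invFun x := x - (k * ω x s) • s
  left_inv x := by
    simp only [map_add, map_smul, LinearMap.add_apply, LinearMap.smul_apply, halt s,
      smul_eq_mul, mul_zero, add_zero]
    abel
  right_inv x := by
    simp only [map_sub, map_smul, LinearMap.sub_apply, LinearMap.smul_apply, halt s,
      smul_eq_mul, mul_zero, sub_zero]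
    abel

lemma orbit_refl (α : Module.Dual K X) : sameDualOrbit ω S α α :=
  ⟨1, one_mem _, fun _ => rfl⟩

lemma orbit_symm {α β : Module.Dual K X} (h : sameDualOrbit ω S α β) :
    sameDualOrbit ω S β α := by
  obtain ⟨g, hg, h⟩ := h
  exact ⟨g⁻¹, inv_mem hg, fun x => by rw [h (g⁻¹ x)]; simp⟩

lemma orbit_trans {α β γ : Module.Dual K X} (h1 : sameDualOrbit ω S α β)
    (h2 : sameDualOrbit ω S β γ) : sameDualOrbit ω S α γ := by
  obtain ⟨g, hg, h1⟩ := h1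
  obtain ⟨f, hf, h2⟩ := h2
  exact ⟨g * f, mul_mem hg hf, fun x => by rw [h2 x, h1 (f x)]; rfl⟩

lemma orbit_move (halt : ∀ x, ω x x = 0) {α : Module.Dual K X} {s : X}
    (hs : s ∈ S) (hα : α s ≠ 0) (d : K) :
    sameDualOrbit ω S α (α + d • ω s) := by
  by_cases hd : d = 0
  · subst hd; simpa using orbit_refl ω S α
  · refine ⟨tperm ω halt s (-(d / α s)),
      Subgroup.subset_closure ⟨s, hs, -(d / α s), by simp [div_eq_zero_iff, hd, hα],
        fun x => rfl⟩, ?_⟩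
    intro x
    have hskew := skew ω halt s x
    simp only [tperm, Equiv.coe_fn_mk, map_add, map_smul, LinearMap.add_apply,
      LinearMap.smul_apply, smul_eq_mul]
    rw [hskew]
    field_simp
end Stmt0Aux

namespace Stmt0Aux
variable {K X : Type*} [Field K] [AddCommGroup X] [Module K X]
variable (ω : X →ₗ[K] X →ₗ[K] K) (S : Set X)

lemma exists_support (hspan : Submodule.span K S = ⊤) {α : Module.Dual K X}
    (hα : α ≠ 0) : ∃ u ∈ S, α u ≠ 0 := by
  by_contra h
  push_neg at h
  exact hα (LinearMap.ext_on hspan (fun x hx => by simpa using h x hx))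

lemma exists_scalar (hK : ∃ k : K, k ≠ 0 ∧ k ≠ 1) (a b : K) (h : a ≠ 0 ∨ b ≠ 0) :
    ∃ l : K, l ≠ 0 ∧ a + l * b ≠ 0 := by
  obtain ⟨k, hk0, hk1⟩ := hK
  by_cases h1 : a + 1 * b ≠ 0
  · exact ⟨1, one_ne_zero, h1⟩
  by_cases h2 : a + k * b ≠ 0
  · exact ⟨k, hk0, h2⟩
  push_neg at h1 h2
  exfalso
  have hb : b = 0 := by
    have := sub_eq_zero.2 (h1.trans h2.symm)
    have h3 : (1 - k) * b = 0 := by ring_nf; linear_combination h1 - h2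
    rcases mul_eq_zero.1 h3 with h | h
    · exact absurd (by linear_combination -h) hk1
    · exact h
  rcases h with h | h
  · exact h (by linear_combination h1 - hb)
  · exact h hb

lemma exists_scalar' (hK : ∃ k : K, k ≠ 0 ∧ k ≠ 1) (γ φ : Module.Dual K X)
    (h : γ ≠ 0) : ∃ l : K, l ≠ 0 ∧ γ + l • φ ≠ 0 := by
  obtain ⟨k, hk0, hk1⟩ := hK
  by_cases h1 : γ + (1 : K) • φ ≠ 0
  · exact ⟨1, one_ne_zero, h1⟩
  by_cases h2 : γ + k • φ ≠ 0
  · exact ⟨k, hk0, h2⟩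
  push_neg at h1 h2
  exfalso
  have hφ : φ = 0 := by
    have h3 : (1 - k) • φ = 0 := by
      have e : (1 - k) • φ = (γ + (1 : K) • φ) - (γ + k • φ) := by module
      rw [e, h1, h2, sub_zero]
    rcases smul_eq_zero.1 h3 with h | h
    · exact absurd (by linear_combination -h) hk1
    · exact h
  apply h
  rw [hφ, smul_zero, add_zero] at h1
  exact h1

lemma adj_omega {a b : ↥S} (halt : ∀ x, ω x x = 0)
    (h : (transGraph ω S).Adj a b) : ω a.1 b.1 ≠ 0 := by
  rw [transGraph, SimpleGraph.fromRel_adj] at h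
  rcases h.2 with h' | h'
  · exact h'
  · rw [skew ω halt a.1 b.1]
    simpa using h'

lemma apply_eval (α : Module.Dual K X) (c : K) (s x : X) :
    (α + c • ω s) x = α x + c * ω s x := by
  simp [LinearMap.add_apply, LinearMap.smul_apply, smul_eq_mul]

end Stmt0Aux

namespace Stmt0Aux
variable {K X : Type*} [Field K] [AddCommGroup X] [Module K X]
variable {ω : X →ₗ[K] X →ₗ[K] K} {S : Set X}

lemma crux (halt : ∀ x, ω x x = 0) (hK : ∃ k : K, k ≠ 0 ∧ k ≠ 1) :
    ∀ n : ℕ, ∀ (sv tv : ↥S) (α : Module.Dual K X) (c : K),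
    ω sv.1 tv.1 ≠ 0 → α sv.1 = 0 → α tv.1 ≠ 0 → c ≠ 0 →
    α + c • ω sv.1 ≠ 0 → (α + c • ω sv.1) tv.1 = 0 →
    ∀ (v : ↥S) (w : (transGraph ω S).Walk tv v),
      (α + c • ω sv.1) v.1 ≠ 0 → w.length ≤ n →
      sameDualOrbit ω S α (α + c • ω sv.1) := by
  intro n
  induction n using Nat.strong_induction_on with
  | _ n ih =>
  intro sv tv α c hωst hαs hαt hc hβ hβt v w hβv hwn
  cases w with
  | nil => exact absurd hβt (by simpa using hβv)
  | @cons _ q _ hadj w' =>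
    have hωtq : ω tv.1 q.1 ≠ 0 := adj_omega ω S halt hadj
    have hlen : w'.length < n := by
      have := SimpleGraph.Walk.length_cons hadj w'
      omega
    have hωts : ω tv.1 sv.1 ≠ 0 := by
      rw [skew ω halt tv.1 sv.1]; simpa using hωst
    by_cases hβq : (α + c • ω sv.1) q.1 = 0
    · -- recursive case
      have h1 : sameDualOrbit ω S α (α + (1 : K) • ω tv.1) :=
        orbit_move ω S halt tv.2 hαt 1
      have h2 : sameDualOrbit ω S (α + (1 : K) • ω tv.1)
          (α + (1 : K) • ω tv.1 + c • ω sv.1) := by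
        refine orbit_move ω S halt sv.2 ?_ c
        rw [apply_eval, hαs, zero_add, one_mul]
        exact hωts
      -- σ := α + 1 • ω tv + c • ω sv = (α + c • ω sv) + 1 • ω tv
      have eσ : α + (1 : K) • ω tv.1 + c • ω sv.1
          = (α + c • ω sv.1) + (1 : K) • ω tv.1 := by module
      have eβ : (α + c • ω sv.1) + (1 : K) • ω tv.1 + (-1 : K) • ω tv.1
          = α + c • ω sv.1 := by module
      have h3 : sameDualOrbit ω S ((α + c • ω sv.1) + (1 : K) • ω tv.1)
          (α + c • ω sv.1) := by
        have key := ih w'.length hlen tv q ((α + c • ω sv.1) + (1 : K) • ω tv.1)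
          (-1) hωtq ?_ ?_ (by simp) ?_ ?_ v w' ?_ le_rfl
        · rw [eβ] at key; exact key
        · rw [apply_eval, hβt, halt, zero_add, mul_zero]
        · rw [apply_eval, hβq, zero_add, one_mul]; exact hωtq
        · rw [eβ]; exact hβ
        · rw [show (α + c • ω sv.1) + (1:K) • ω tv.1 + (-1 : K) • ω tv.1
            = α + c • ω sv.1 from eβ]
          exact hβq
        · rw [eβ]; exact hβv
      refine orbit_trans ω S (orbit_trans ω S h1 ?_) h3
      rw [eσ] at h2; exact h2
    · -- 5-move case
      obtain ⟨l, hl0, hl⟩ := exists_scalar hK ((α + c • ω sv.1) q.1)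
        (ω tv.1 q.1) (Or.inl hβq)
      have m1 : sameDualOrbit ω S α (α + l • ω tv.1) :=
        orbit_move ω S halt tv.2 hαt l
      have m2 : sameDualOrbit ω S (α + l • ω tv.1)
          (α + l • ω tv.1 + c • ω sv.1) := by
        refine orbit_move ω S halt sv.2 ?_ c
        rw [apply_eval, hαs, zero_add]
        exact mul_ne_zero hl0 hωts
      have e2 : α + l • ω tv.1 + c • ω sv.1
          = (α + c • ω sv.1) + l • ω tv.1 := by module
      have m3 : sameDualOrbit ω S ((α + c • ω sv.1) + l • ω tv.1)
          ((α + c • ω sv.1) + l • ω tv.1 + (1 : K) • ω q.1) := by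
        refine orbit_move ω S halt q.2 ?_ 1
        rw [apply_eval]
        exact hl
      have m4 : sameDualOrbit ω S ((α + c • ω sv.1) + l • ω tv.1 + (1 : K) • ω q.1)
          ((α + c • ω sv.1) + l • ω tv.1 + (1 : K) • ω q.1 + (-l) • ω tv.1) := by
        refine orbit_move ω S halt tv.2 ?_ (-l)
        rw [apply_eval, apply_eval, hβt, halt, zero_add, mul_zero, zero_add, one_mul]
        rw [skew ω halt q.1 tv.1]
        simpa using hωtq
      have e4 : (α + c • ω sv.1) + l • ω tv.1 + (1 : K) • ω q.1 + (-l) • ω tv.1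
          = (α + c • ω sv.1) + (1 : K) • ω q.1 := by module
      have m5 : sameDualOrbit ω S ((α + c • ω sv.1) + (1 : K) • ω q.1)
          ((α + c • ω sv.1) + (1 : K) • ω q.1 + (-1 : K) • ω q.1) := by
        refine orbit_move ω S halt q.2 ?_ (-1)
        rw [apply_eval, halt, mul_zero, add_zero]
        exact hβq
      have e5 : (α + c • ω sv.1) + (1 : K) • ω q.1 + (-1 : K) • ω q.1
          = α + c • ω sv.1 := by module
      rw [e2] at m2
      rw [e4] at m4
      rw [e5] at m5
      exact orbit_trans ω S m1 (orbit_trans ω S m2 (orbit_trans ω S m3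
        (orbit_trans ω S m4 m5)))
end Stmt0Aux

namespace Stmt0Aux
variable {K X : Type*} [Field K] [AddCommGroup X] [Module K X]
variable {ω : X →ₗ[K] X →ₗ[K] K} {S : Set X}

lemma emm (halt : ∀ x, ω x x = 0) (hK : ∃ k : K, k ≠ 0 ∧ k ≠ 1)
    (hspan : Submodule.span K S = ⊤) (hconn : (transGraph ω S).Connected) :
    ∀ n : ℕ, ∀ (sv u : ↥S) (α : Module.Dual K X) (c : K),
    α ≠ 0 → α + c • ω sv.1 ≠ 0 → α u.1 ≠ 0 →
    ∀ w : (transGraph ω S).Walk u sv, w.length ≤ n →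
    sameDualOrbit ω S α (α + c • ω sv.1) := by
  intro n
  induction n using Nat.strong_induction_on with
  | _ n ih =>
  intro sv u α c hα hβ hαu w hwn
  by_cases hcs : c • ω sv.1 = 0
  · rw [hcs, add_zero]; exact orbit_refl ω S α
  have hc : c ≠ 0 := fun h => hcs (by rw [h, zero_smul])
  by_cases hαs : α sv.1 = 0
  swap
  · exact orbit_move ω S halt sv.2 hαs c
  cases w with
  | nil => exact absurd hαs hαu
  | @cons _ q _ hadj w' =>
    have hωuq : ω u.1 q.1 ≠ 0 := adj_omega ω S halt hadj
    have hlen : w'.length < n := by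
      have := SimpleGraph.Walk.length_cons hadj w'
      omega
    by_cases hβu : (α + c • ω sv.1) u.1 = 0
    · -- apply crux with t := u
      have hωsu : ω sv.1 u.1 ≠ 0 := by
        intro h0
        rw [apply_eval, h0, mul_zero, add_zero] at hβu
        exact hαu hβu
      obtain ⟨vx, hvx, hβvx⟩ := exists_support S hspan hβ
      obtain ⟨w0⟩ := hconn.preconnected u ⟨vx, hvx⟩
      exact crux halt hK w0.length sv u α c hωsu hαs hαu hc hβ hβu
        ⟨vx, hvx⟩ w0 hβvx le_rfl
    · by_cases hαq : α q.1 = 0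
      · -- push support toward sv
        obtain ⟨ν, hν0, hν⟩ := exists_scalar' hK (α + c • ω sv.1) (ω u.1) hβ
        have m1 : sameDualOrbit ω S α (α + ν • ω u.1) :=
          orbit_move ω S halt u.2 hαu ν
        have hα'q : (α + ν • ω u.1) q.1 ≠ 0 := by
          rw [apply_eval, hαq, zero_add]
          exact mul_ne_zero hν0 hωuq
        have e1 : α + ν • ω u.1 + c • ω sv.1
            = (α + c • ω sv.1) + ν • ω u.1 := by module
        have m2 : sameDualOrbit ω S (α + ν • ω u.1)
            (α + ν • ω u.1 + c • ω sv.1) := by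
          refine ih w'.length hlen sv q (α + ν • ω u.1) c ?_ ?_ hα'q w' le_rfl
          · intro h0
            rw [h0] at hα'q
            exact hα'q (by simp)
          · rw [e1]
            exact hν
        have m3 : sameDualOrbit ω S ((α + c • ω sv.1) + ν • ω u.1)
            ((α + c • ω sv.1) + ν • ω u.1 + (-ν) • ω u.1) := by
          refine orbit_move ω S halt u.2 ?_ (-ν)
          rw [apply_eval, halt, mul_zero, add_zero]
          exact hβu
        have e3 : (α + c • ω sv.1) + ν • ω u.1 + (-ν) • ω u.1
            = α + c • ω sv.1 := by module
        rw [e1] at m2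
        rw [e3] at m3
        exact orbit_trans ω S m1 (orbit_trans ω S m2 m3)
      · -- support already closer
        exact ih w'.length hlen sv q α c hα hβ hαq w' le_rfl

lemma emm_final (halt : ∀ x, ω x x = 0) (hK : ∃ k : K, k ≠ 0 ∧ k ≠ 1)
    (hspan : Submodule.span K S = ⊤) (hconn : (transGraph ω S).Connected)
    (α : Module.Dual K X) (c : K) {s : X} (hs : s ∈ S)
    (hα : α ≠ 0) (hβ : α + c • ω s ≠ 0) :
    sameDualOrbit ω S α (α + c • ω s) := by
  obtain ⟨u, hu, hαu⟩ := exists_support S hspan hα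
  obtain ⟨w0⟩ := hconn.preconnected ⟨u, hu⟩ ⟨s, hs⟩
  exact emm halt hK hspan hconn w0.length ⟨s, hs⟩ ⟨u, hu⟩ α c hα hβ hαu w0 le_rfl

end Stmt0Aux

namespace Stmt0Aux
variable {K X : Type*} [Field K] [AddCommGroup X] [Module K X]
variable (ω : X →ₗ[K] X →ₗ[K] K)

/-- sum of a list of scaled rows of ω -/
def sumL (l : List (K × X)) : Module.Dual K X := (l.map (fun p => p.1 • ω p.2)).sum

@[simp] lemma sumL_nil : sumL ω ([] : List (K × X)) = 0 := by simp [sumL]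

@[simp] lemma sumL_cons (p : K × X) (l : List (K × X)) :
    sumL ω (p :: l) = p.1 • ω p.2 + sumL ω l := by simp [sumL]

variable {S : Set X}

lemma list_lemma (halt : ∀ x, ω x x = 0) (hK : ∃ k : K, k ≠ 0 ∧ k ≠ 1)
    (hspan : Submodule.span K S = ⊤) (hconn : (transGraph ω S).Connected) :
    ∀ n : ℕ, ∀ l : List (K × X), l.length ≤ n → (∀ p ∈ l, p.2 ∈ S) →
    ∀ α : Module.Dual K X, α ≠ 0 → α + sumL ω l ≠ 0 →
    sameDualOrbit ω S α (α + sumL ω l) := by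
  intro n
  induction n using Nat.strong_induction_on with
  | _ n ih =>
  intro l hln hmem α hα hβ
  match l with
  | [] => rw [sumL_nil, add_zero]; exact orbit_refl ω S α
  | p :: l' =>
    have hps : p.2 ∈ S := hmem p (by simp)
    by_cases hδ : α + p.1 • ω p.2 = 0
    · match l' with
      | [] =>
        rw [sumL_cons, sumL_nil, add_zero] at hβ
        exact absurd hδ hβ
      | p₂ :: l'' =>
        by_cases hδ2 : α + p₂.1 • ω p₂.2 = 0
        · -- merge the two first steps
          have he : p₂.1 • ω p₂.2 = p.1 • ω p.2 := by
            have e : p₂.1 • ω p₂.2 - p.1 • ω p.2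
                = (α + p₂.1 • ω p₂.2) - (α + p.1 • ω p.2) := by abel
            have e0 : p₂.1 • ω p₂.2 - p.1 • ω p.2 = 0 := by
              rw [e, hδ, hδ2, sub_zero]
            exact sub_eq_zero.1 e0
          have hsum : sumL ω (p :: p₂ :: l'') = sumL ω ((p.1 + p.1, p.2) :: l'') := by
            rw [sumL_cons, sumL_cons, sumL_cons, he]
            simp only [add_smul]
            abel
          rw [hsum]
          refine ih (l''.length + 1) (by simp at hln ⊢; omega)
            ((p.1 + p.1, p.2) :: l'') le_rfl ?_ α hα ?_
          · intro r hr
            rcases List.mem_cons.1 hr with h | h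
            · rw [h]; exact hps
            · exact hmem r (by simp [h])
          · rw [← hsum]; exact hβ
        · -- swap the first two steps
          have m1 : sameDualOrbit ω S α (α + p₂.1 • ω p₂.2) :=
            emm_final halt hK hspan hconn α p₂.1 (hmem p₂ (by simp)) hα hδ2
          have e1 : (α + p₂.1 • ω p₂.2) + sumL ω (p :: l'')
              = α + sumL ω (p :: p₂ :: l'') := by
            rw [sumL_cons, sumL_cons, sumL_cons]; abel
          have m2 : sameDualOrbit ω S (α + p₂.1 • ω p₂.2)
              ((α + p₂.1 • ω p₂.2) + sumL ω (p :: l'')) := by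
            refine ih (l''.length + 1) (by simp at hln ⊢; omega) (p :: l'') le_rfl ?_
              (α + p₂.1 • ω p₂.2) hδ2 ?_
            · intro r hr
              rcases List.mem_cons.1 hr with h | h
              · rw [h]; exact hps
              · exact hmem r (by simp [h])
            · rw [e1]; exact hβ
          rw [e1] at m2
          exact orbit_trans ω S m1 m2
    · have m1 : sameDualOrbit ω S α (α + p.1 • ω p.2) :=
        emm_final halt hK hspan hconn α p.1 hps hα hδ
      have e1 : (α + p.1 • ω p.2) + sumL ω l' = α + sumL ω (p :: l') := by
        rw [sumL_cons]; abel
      have m2 : sameDualOrbit ω S (α + p.1 • ω p.2)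
          ((α + p.1 • ω p.2) + sumL ω l') := by
        refine ih l'.length (by simp at hln ⊢; omega) l' le_rfl ?_
          (α + p.1 • ω p.2) hδ ?_
        · intro r hr; exact hmem r (by simp [hr])
        · rw [e1]; exact hβ
      rw [e1] at m2
      exact orbit_trans ω S m1 m2

end Stmt0Aux

namespace Stmt0Aux
variable {K X : Type*} [Field K] [AddCommGroup X] [Module K X]
variable {ω : X →ₗ[K] X →ₗ[K] K} {S : Set X}

lemma gen_inv_apply (halt : ∀ x, ω x x = 0) (f : Equiv.Perm X) {s : X} {k : K}
    (hf : ∀ x, f x = x + (k * ω x s) • s) (x : X) :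
    f⁻¹ x = x - (k * ω x s) • s := by
  have h : f (x - (k * ω x s) • s) = x := by
    rw [hf]
    simp only [map_sub, map_smul, LinearMap.sub_apply, LinearMap.smul_apply,
      halt s, smul_eq_mul, mul_zero, sub_zero]
    abel
  calc f⁻¹ x = f⁻¹ (f (x - (k * ω x s) • s)) := by rw [h]
    _ = x - (k * ω x s) • s := Equiv.symm_apply_apply f _

lemma closure_diff (halt : ∀ x, ω x x = 0) {g : Equiv.Perm X}
    (hg : g ∈ transvectionGroup ω S) :
    ∀ α : Module.Dual K X,
      (∃ v, ∀ x, α (g x) = α x + ω v x) ∧ (∃ v, ∀ x, α (g⁻¹ x) = α x + ω v x) := by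
  have hg' : g ∈ Subgroup.closure (transvectionSet ω S) := hg
  clear hg
  induction hg' using Subgroup.closure_induction with
  | mem f hf =>
    obtain ⟨s, _, k, _, hf⟩ := hf
    intro α
    constructor
    · refine ⟨(-(k * α s)) • s, fun x => ?_⟩
      rw [hf x]
      simp only [map_add, map_smul, LinearMap.add_apply, LinearMap.smul_apply,
        smul_eq_mul, map_neg, LinearMap.neg_apply, map_smul]
      rw [skew ω halt s x]
      ring
    · refine ⟨(k * α s) • s, fun x => ?_⟩
      rw [gen_inv_apply halt f hf x]
      simp only [map_sub, map_smul, LinearMap.sub_apply, LinearMap.smul_apply,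
        smul_eq_mul]
      rw [skew ω halt s x]
      ring
  | one =>
    intro α
    exact ⟨⟨0, fun x => by simp⟩, ⟨0, fun x => by simp⟩⟩
  | mul a b _ _ ha hb =>
    intro α
    constructor
    · obtain ⟨v1, h1⟩ := (ha α).1
      obtain ⟨v2, h2⟩ := (hb α).1
      obtain ⟨v3, h3⟩ := (hb (ω v1)).1
      refine ⟨v2 + v1 + v3, fun x => ?_⟩
      rw [Equiv.Perm.mul_apply, h1 (b x), h2 x, h3 x]
      simp only [map_add, LinearMap.add_apply]
      ring
    · obtain ⟨v1, h1⟩ := (hb α).2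
      obtain ⟨v2, h2⟩ := (ha α).2
      obtain ⟨v3, h3⟩ := (ha (ω v1)).2
      refine ⟨v2 + v1 + v3, fun x => ?_⟩
      rw [mul_inv_rev, Equiv.Perm.mul_apply, h1 (a⁻¹ x), h2 x, h3 x]
      simp only [map_add, LinearMap.add_apply]
      ring
  | inv a _ ha =>
    intro α
    refine ⟨(ha α).2, ?_⟩
    rw [inv_inv]
    exact (ha α).1

end Stmt0Aux


/-- if `K` has more than two elements, `S` spans `X` and `G(S)` is
connected, then nonzero `α, β ∈ X*` lie in the same `Tr(S)*`-orbit iff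
`β - α ∈ im ω`. -/
theorem stmt0 {K X : Type*} [Field K] [AddCommGroup X] [Module K X]
    [FiniteDimensional K X]
    (ω : X →ₗ[K] X →ₗ[K] K) (halt : ∀ x, ω x x = 0)
    (hK : ∃ k : K, k ≠ 0 ∧ k ≠ 1)
    (S : Set X) (hspan : Submodule.span K S = ⊤)
    (hconn : (transGraph ω S).Connected)
    (α β : Module.Dual K X) (hα : α ≠ 0) (hβ : β ≠ 0) :
    sameDualOrbit ω S α β ↔ β - α ∈ LinearMap.range ω := by
  constructor
  · rintro ⟨g, hg, hgx⟩
    obtain ⟨⟨v, hv⟩, -⟩ := Stmt0Aux.closure_diff halt hg α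
    refine ⟨v, ?_⟩
    ext x
    rw [LinearMap.sub_apply, hgx x, hv x]
    ring
  · rintro ⟨v, hv⟩
    have hvS : v ∈ Submodule.span K S := by rw [hspan]; trivial
    obtain ⟨m, f, gg, hsum⟩ := Submodule.mem_span_set'.1 hvS
    set l : List (K × X) := List.ofFn (fun i => (f i, (gg i : X))) with hl
    have hmem : ∀ p ∈ l, p.2 ∈ S := by
      intro p hp
      rw [hl, List.mem_ofFn] at hp
      obtain ⟨i, hi⟩ := hp
      rw [← hi]
      exact (gg i).2
    have hsum2 : Stmt0Aux.sumL ω l = ω v := by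
      rw [← hsum, map_sum]
      rw [hl, Stmt0Aux.sumL, List.map_ofFn, List.sum_ofFn]
      simp [map_smul]
    have hβeq : β = α + Stmt0Aux.sumL ω l := by
      rw [hsum2, hv]; abel
    rw [hβeq]
    refine Stmt0Aux.list_lemma ω halt hK hspan hconn l.length l le_rfl hmem α hα ?_
    rw [← hβeq]
    exact hβ
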